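/- For μ₀, mₛ > 0, define Φ(b) = −mₛ|b| + (μ₀/2)mₛ² on ℝ³ (the formal single-field density of hard saturation). Then the two-step transformation (−Φ)*(m) − (μ₀/2)|m|², where (−Φ)* is the convex conjugate, equals (μ₀/2)(mₛ² − |m|²) for |m| ≤ mₛ and +∞ for |m| > mₛ. In particular, this function is neither the indicator of the sphere {|m| = mₛ} nor the indicator of the ball {|m| ≤ mₛ}, i.e., the hard saturation model is not recovered by the duality transformation. -/

import Mathlib

open scoped RealInnerProductSpace

/-- The two-step transform `(−Φ)*(m) − (μ₀/2)|m|²` for the hard-saturation single-field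
density `Φ(b) = −mₛ|b| + (μ₀/2)mₛ²`. -/
noncomputable def hardSatTransform (μ₀ ms : ℝ) (m : EuclideanSpace ℝ (Fin 3)) : EReal :=
  (⨆ b : EuclideanSpace ℝ (Fin 3),
    ((⟪m, b⟫ - (ms * ‖b‖ - μ₀ / 2 * ms ^ 2) : ℝ) : EReal)) -
    ((μ₀ / 2 * ‖m‖ ^ 2 : ℝ) : EReal)

lemma hardSat_eq (μ₀ ms : ℝ) (hms : 0 < ms) (m : EuclideanSpace ℝ (Fin 3)) :
    hardSatTransform μ₀ ms m =
      if ‖m‖ ≤ ms then ((μ₀ / 2 * (ms ^ 2 - ‖m‖ ^ 2) : ℝ) : EReal) else ⊤ := by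
  unfold hardSatTransform
  split_ifs with h
  · have hsup : (⨆ b : EuclideanSpace ℝ (Fin 3),
        ((⟪m, b⟫ - (ms * ‖b‖ - μ₀ / 2 * ms ^ 2) : ℝ) : EReal))
        = ((μ₀ / 2 * ms ^ 2 : ℝ) : EReal) := by
      apply le_antisymm
      · apply iSup_le
        intro b
        rw [EReal.coe_le_coe_iff]
        have h1 : ⟪m, b⟫ ≤ ‖m‖ * ‖b‖ := real_inner_le_norm m b
        have h2 : ‖m‖ * ‖b‖ ≤ ms * ‖b‖ :=
          mul_le_mul_of_nonneg_right h (norm_nonneg b)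
        nlinarith
      · refine le_trans ?_ (le_iSup _ (0 : EuclideanSpace ℝ (Fin 3)))
        simp
    rw [hsup, ← EReal.coe_sub, EReal.coe_eq_coe_iff]
    ring
  · push_neg at h
    have hsup : (⨆ b : EuclideanSpace ℝ (Fin 3),
        ((⟪m, b⟫ - (ms * ‖b‖ - μ₀ / 2 * ms ^ 2) : ℝ) : EReal)) = ⊤ := by
      rw [iSup_eq_top]
      intro c hc
      have hd : 0 < ‖m‖ * (‖m‖ - ms) := by
        have : 0 < ‖m‖ := hms.trans h
        nlinarith
      -- choose large t
      obtain ⟨r, hr⟩ : ∃ r : ℝ, c < (r : EReal) := by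
        cases c with
        | bot => exact ⟨0, EReal.bot_lt_coe 0⟩
        | coe x => exact ⟨x + 1, by exact_mod_cast lt_add_one x⟩
        | top => exact absurd hc (lt_irrefl _)
      set t : ℝ := max 0 ((r - μ₀ / 2 * ms ^ 2) / (‖m‖ * (‖m‖ - ms)) + 1) with ht
      have ht0 : 0 ≤ t := le_max_left _ _
      refine ⟨t • m, lt_of_lt_of_le hr ?_⟩
      rw [EReal.coe_le_coe_iff]
      have hin : ⟪m, t • m⟫ = t * ‖m‖ ^ 2 := by
        rw [real_inner_smul_right, real_inner_self_eq_norm_sq]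
      have hnrm : ‖t • m‖ = t * ‖m‖ := by
        rw [norm_smul, Real.norm_eq_abs, abs_of_nonneg ht0]
      rw [hin, hnrm]
      have hge : (r - μ₀ / 2 * ms ^ 2) / (‖m‖ * (‖m‖ - ms)) + 1 ≤ t := le_max_right _ _
      have h3 : r - μ₀ / 2 * ms ^ 2 < t * (‖m‖ * (‖m‖ - ms)) := by
        have := (div_lt_iff₀ hd).mp (lt_of_lt_of_le (lt_add_one _) hge)
        nlinarith
      nlinarith
    rw [hsup]
    exact EReal.top_sub_coe _

/-- the two-step transform of the hard-saturation density equals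
`(μ₀/2)(mₛ² − |m|²)` for `|m| ≤ mₛ` and `+∞` otherwise; in particular it is neither the
indicator of the sphere `{|m| = mₛ}` nor the indicator of the ball `{|m| ≤ mₛ}`. -/
theorem stmt18
    (μ₀ ms : ℝ) (hμ₀ : 0 < μ₀) (hms : 0 < ms) :
    (∀ m : EuclideanSpace ℝ (Fin 3),
      hardSatTransform μ₀ ms m =
        if ‖m‖ ≤ ms then ((μ₀ / 2 * (ms ^ 2 - ‖m‖ ^ 2) : ℝ) : EReal) else ⊤) ∧
    ¬ (∀ m : EuclideanSpace ℝ (Fin 3),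
      hardSatTransform μ₀ ms m = if ‖m‖ = ms then (0 : EReal) else ⊤) ∧
    ¬ (∀ m : EuclideanSpace ℝ (Fin 3),
      hardSatTransform μ₀ ms m = if ‖m‖ ≤ ms then (0 : EReal) else ⊤) := by
  refine ⟨fun m => hardSat_eq μ₀ ms hms m, ?_, ?_⟩
  · intro hcon
    have h0 := hcon 0
    rw [hardSat_eq μ₀ ms hms 0] at h0
    simp [hms.le, hms.ne] at h0
    rw [← EReal.coe_pow, ← EReal.coe_mul] at h0
    exact EReal.coe_ne_top _ h0
  · intro hcon
    have h0 := hcon 0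
    rw [hardSat_eq μ₀ ms hms 0] at h0
    simp [hms.le] at h0
    have h0 : μ₀ / 2 * ms ^ 2 = 0 := by rcases h0 with h0 | h0 <;> simp [h0]
    have : 0 < μ₀ / 2 * ms ^ 2 := by positivity
    linarith
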